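/- arXiv:1403.0355 — 2 statements merged into one kernel-verified Lean document; each statement's English description precedes it below -/
import Mathlib

section
/- Let K ≥ 1, σ² > 0, and fix nonnegative h_i > 0 and P_j ≥ 0 for j ≠ n. Define f(P_n) = ln(1 + h_nP_n/(σ² + ∑_{j≠n} h_jP_j)) + ∑_{i≠n} ln(1 + h_iP_i/(σ² + ∑_{j≠i} h_jP_j)), viewed as a function of P_n ≥ 0 (with P_n appearing also in the denominators of the terms i ≠ n). Then the derivative of f with respect to P_n equals (h_n/(σ² + ∑_{j=1}^K h_jP_j)) · (1 − ∑_{i≠n} h_iP_i/(σ² + ∑_{j≠i} h_jP_j)). -/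
theorem sum_rate_deriv (K : ℕ) (hK : 1 ≤ K) (σ2 : ℝ) (hσ : 0 < σ2)
    (n : Fin K) (h : Fin K → ℝ) (hh : ∀ i, 0 < h i)
    (P : Fin K → ℝ) (hP : ∀ j, j ≠ n → 0 ≤ P j) (x : ℝ) (hx : 0 ≤ x) :
    HasDerivAt
      (fun y : ℝ => ∑ i, Real.log (1 +
        h i * Function.update P n y i /
          (σ2 + ∑ j ∈ Finset.univ.erase i, h j * Function.update P n y j)))
      (h n / (σ2 + ∑ j, h j * Function.update P n x j) *
        (1 - ∑ i ∈ Finset.univ.erase n,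
          h i * Function.update P n x i /
            (σ2 + ∑ j ∈ Finset.univ.erase i, h j * Function.update P n x j)))
      x := by
  have hQnonneg : ∀ j, 0 ≤ Function.update P n x j := by
    intro j
    by_cases hj : j = n
    · subst hj; simpa using hx
    · rw [Function.update_of_ne hj]; exact hP j hj
  set Q : Fin K → ℝ := Function.update P n x with hQ
  set T : ℝ := σ2 + ∑ j, h j * Q j with hT
  have hsum_nonneg : ∀ s : Finset (Fin K), 0 ≤ ∑ j ∈ s, h j * Q j := fun s =>
    Finset.sum_nonneg fun j _ => mul_nonneg (hh j).le (hQnonneg j)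
  have hTpos : 0 < T := add_pos_of_pos_of_nonneg hσ (hsum_nonneg _)
  have hDpos : ∀ i : Fin K, 0 < σ2 + ∑ j ∈ Finset.univ.erase i, h j * Q j := fun i =>
    add_pos_of_pos_of_nonneg hσ (hsum_nonneg _)
  have hTD : ∀ i : Fin K, T = (σ2 + ∑ j ∈ Finset.univ.erase i, h j * Q j) + h i * Q i := by
    intro i
    rw [hT, ← Finset.add_sum_erase Finset.univ (fun j => h j * Q j) (Finset.mem_univ i)]
    ring
  set g : Fin K → ℝ := fun i => if i = n then h n / T
    else h n / T - h n / (σ2 + ∑ j ∈ Finset.univ.erase i, h j * Q j) with hg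
  have hterm : ∀ i : Fin K, HasDerivAt (fun y : ℝ => Real.log (1 +
      h i * Function.update P n y i /
        (σ2 + ∑ j ∈ Finset.univ.erase i, h j * Function.update P n y j))) (g i) x := by
    intro i
    by_cases hi : i = n
    · subst hi
      set C : ℝ := σ2 + ∑ j ∈ Finset.univ.erase i, h j * P j with hC
      have hCpos : 0 < C := add_pos_of_pos_of_nonneg hσ (Finset.sum_nonneg fun j hj =>
        mul_nonneg (hh j).le (hP j (Finset.ne_of_mem_erase hj)))
      have hfun : (fun y : ℝ => Real.log (1 +
          h i * Function.update P i y i /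
            (σ2 + ∑ j ∈ Finset.univ.erase i, h j * Function.update P i y j))) =
          fun y : ℝ => Real.log (1 + h i * y / C) := by
        funext y
        rw [Function.update_self]
        have hs : ∑ j ∈ Finset.univ.erase i, h j * Function.update P i y j =
            ∑ j ∈ Finset.univ.erase i, h j * P j := Finset.sum_congr rfl fun j hj => by
          rw [Function.update_of_ne (Finset.ne_of_mem_erase hj)]
        rw [hs]
      rw [hfun]
      have h1 : HasDerivAt (fun y : ℝ => 1 + h i * y / C) (h i / C) x := by
        have := (((hasDerivAt_id x).const_mul (h i)).div_const C).const_add 1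
        simpa using this
      have harg : (0:ℝ) < 1 + h i * x / C :=
        add_pos_of_pos_of_nonneg one_pos (div_nonneg (mul_nonneg (hh i).le hx) hCpos.le)
      have hlog := h1.log (ne_of_gt harg)
      convert hlog using 1
      have hTC : T = C + h i * x := by
        rw [hT, hC, ← Finset.add_sum_erase Finset.univ (fun j => h j * Q j) (Finset.mem_univ i)]
        have hQi : Q i = x := by rw [hQ, Function.update_self]
        have hs : ∑ j ∈ Finset.univ.erase i, h j * Q j =
            ∑ j ∈ Finset.univ.erase i, h j * P j := Finset.sum_congr rfl fun j hj => by
          rw [hQ, Function.update_of_ne (Finset.ne_of_mem_erase hj)]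
        rw [hQi, hs]; ring
      rw [hg]
      simp only [if_pos rfl, eq_self_iff_true, ↓reduceIte]
      rw [hTC]
      have hCx : (0:ℝ) < C + h i * x := by
        have := mul_nonneg (hh i).le hx; linarith
      field_simp
    · -- i ≠ n
      set c : ℝ := h i * P i with hc
      have hcnn : 0 ≤ c := mul_nonneg (hh i).le (hP i hi)
      have hnmem : n ∈ Finset.univ.erase i :=
        Finset.mem_erase.2 ⟨fun hne => hi hne.symm, Finset.mem_univ n⟩
      set B : ℝ := ∑ j ∈ (Finset.univ.erase i).erase n, h j * P j with hB
      have hBnn : 0 ≤ B := Finset.sum_nonneg fun j hj =>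
        mul_nonneg (hh j).le (hP j (Finset.ne_of_mem_erase hj))
      have hfun : (fun y : ℝ => Real.log (1 +
          h i * Function.update P n y i /
            (σ2 + ∑ j ∈ Finset.univ.erase i, h j * Function.update P n y j))) =
          fun y : ℝ => Real.log (1 + c / (σ2 + (h n * y + B))) := by
        funext y
        rw [Function.update_of_ne hi]
        have hs : ∑ j ∈ Finset.univ.erase i, h j * Function.update P n y j =
            h n * y + B := by
          rw [← Finset.add_sum_erase _ (fun j => h j * Function.update P n y j) hnmem,
            Function.update_self, hB]
          have : ∑ j ∈ (Finset.univ.erase i).erase n, h j * Function.update P n y j =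
              ∑ j ∈ (Finset.univ.erase i).erase n, h j * P j :=
            Finset.sum_congr rfl fun j hj => by
              rw [Function.update_of_ne (Finset.ne_of_mem_erase hj)]
          rw [this]
        rw [hs, hc]
      rw [hfun]
      have hDi : σ2 + ∑ j ∈ Finset.univ.erase i, h j * Q j = σ2 + (h n * x + B) := by
        rw [← Finset.add_sum_erase _ (fun j => h j * Q j) hnmem, hB]
        have hQn : Q n = x := by rw [hQ, Function.update_self]
        have : ∑ j ∈ (Finset.univ.erase i).erase n, h j * Q j =
            ∑ j ∈ (Finset.univ.erase i).erase n, h j * P j :=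
          Finset.sum_congr rfl fun j hj => by
            rw [hQ, Function.update_of_ne (Finset.ne_of_mem_erase hj)]
        rw [hQn, this]
      have hvpos : (0:ℝ) < σ2 + (h n * x + B) := by
        have : 0 ≤ h n * x := mul_nonneg (hh n).le hx
        linarith
      have hv : HasDerivAt (fun y : ℝ => σ2 + (h n * y + B)) (h n) x := by
        have := (((hasDerivAt_id x).const_mul (h n)).add_const B).const_add σ2
        simpa using this
      have hdiv := (hasDerivAt_const x c).div hv (ne_of_gt hvpos)
      have harg : (0:ℝ) < 1 + c / (σ2 + (h n * x + B)) :=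
        add_pos_of_pos_of_nonneg one_pos (div_nonneg hcnn hvpos.le)
      have hlog := (hdiv.const_add 1).log (ne_of_gt harg)
      convert hlog using 1
      · rfl
      rw [hg]
      simp only [if_neg hi]
      have hTv : T = (σ2 + (h n * x + B)) + c := by
        rw [hTD i, hDi, hc, hQ, Function.update_of_ne hi]
      rw [hTv, hDi]
      have hne : σ2 + (h n * x + B) ≠ 0 := ne_of_gt hvpos
      have hne2 : (σ2 + (h n * x + B)) + c ≠ 0 :=
        ne_of_gt (add_pos_of_pos_of_nonneg hvpos hcnn)
      simp only [Pi.div_apply]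
      field_simp
      ring
  have key : HasDerivAt (fun y : ℝ => ∑ i, Real.log (1 +
      h i * Function.update P n y i /
        (σ2 + ∑ j ∈ Finset.univ.erase i, h j * Function.update P n y j))) (∑ i, g i) x :=
    HasDerivAt.fun_sum fun i _ => hterm i
  have hsum : ∑ i, g i = h n / T *
      (1 - ∑ i ∈ Finset.univ.erase n,
        h i * Q i / (σ2 + ∑ j ∈ Finset.univ.erase i, h j * Q j)) := by
    rw [← Finset.add_sum_erase Finset.univ g (Finset.mem_univ n)]
    have hgn : g n = h n / T := by rw [hg]; simp
    have hrest : ∑ i ∈ Finset.univ.erase n, g i =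
        ∑ i ∈ Finset.univ.erase n,
          (-(h n / T) * (h i * Q i / (σ2 + ∑ j ∈ Finset.univ.erase i, h j * Q j))) := by
      refine Finset.sum_congr rfl fun i hi => ?_
      have hin : i ≠ n := Finset.ne_of_mem_erase hi
      rw [hg]
      simp only [if_neg hin]
      have h1 : σ2 + ∑ j ∈ Finset.univ.erase i, h j * Q j ≠ 0 := ne_of_gt (hDpos i)
      have hw : 0 ≤ h i * Q i := mul_nonneg (hh i).le (hQnonneg i)
      obtain ⟨Dv, hDdef⟩ : ∃ Dv, σ2 + ∑ j ∈ Finset.univ.erase i, h j * Q j = Dv := ⟨_, rfl⟩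
      have hT' := hTD i
      rw [hDdef] at h1 hT' ⊢
      have h3 : Dv + h i * Q i ≠ 0 := by
        have := hDpos i; rw [hDdef] at this; linarith
      rw [hT']
      field_simp
      ring
    rw [hgn, hrest, ← Finset.mul_sum]
    ring
  rw [hsum] at key
  exact key
end

section
/- Let σ² > 0 and suppose a ≥ σ²(e − 1) (equivalently ln(1 + a/σ²) ≥ 1). Then for all b with 0 ≤ b ≤ a, single-user transmission beats sharing: ln(1 + a/σ²) ≥ ln(1 + a/(σ² + b)) + ln(1 + b/(σ² + a)). -/
theorem single_user_beats_sharing (σ2 a b : ℝ) (hσ : 0 < σ2)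
    (ha : σ2 * (Real.exp 1 - 1) ≤ a) (hb0 : 0 ≤ b) (hba : b ≤ a) :
    Real.log (1 + a / (σ2 + b)) + Real.log (1 + b / (σ2 + a)) ≤ Real.log (1 + a / σ2) := by
  have he : (2.7182818283 : ℝ) < Real.exp 1 := Real.exp_one_gt_d9
  have ha0 : 0 ≤ a := le_trans (by nlinarith) ha
  have hσb : 0 < σ2 + b := by linarith
  have hσa : 0 < σ2 + a := by linarith
  have hg : σ2 * 1.7 ≤ a := by nlinarith
  have key : σ2 * (σ2 + b) ≤ a ^ 2 := by
    nlinarith [sq_nonneg (a - 1.7 * σ2), mul_nonneg (sub_nonneg.2 hg) hσ.le, sq_nonneg σ2,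
      mul_le_mul_of_nonneg_left hba hσ.le]
  have h1 : 1 + a / (σ2 + b) = (σ2 + b + a) / (σ2 + b) := by field_simp
  have h2 : 1 + b / (σ2 + a) = (σ2 + a + b) / (σ2 + a) := by field_simp
  have h3 : 1 + a / σ2 = (σ2 + a) / σ2 := by field_simp
  rw [h1, h2, h3, ← Real.log_mul (by positivity) (by positivity)]
  apply Real.log_le_log (by positivity)
  rw [div_mul_div_comm, div_le_div_iff₀ (by positivity) hσ]
  nlinarith [mul_le_mul_of_nonneg_left key hb0]
end
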